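/- The number of triangles in a simple undirected graph with m edges is at most m^{3/2}. -/

import Mathlib

open Finset

section Aux

variable {V : Type*} [Fintype V] [DecidableEq V] (G : SimpleGraph V) [DecidableRel G.Adj]

lemma aux_clique2_le_edges : (G.cliqueFinset 2).card ≤ G.edgeFinset.card := by
  apply Finset.card_le_card_of_surjOn (fun e : Sym2 V => Finset.univ.filter (· ∈ e))
  intro s hs
  rw [Finset.mem_coe, SimpleGraph.mem_cliqueFinset_iff] at hs
  obtain ⟨a, b, hab, rfl⟩ := Finset.card_eq_two.mp hs.card_eq
  have hadj : G.Adj a b := hs.isClique (by simp) (by simp) hab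
  refine ⟨s(a, b), ?_, ?_⟩
  · simpa [SimpleGraph.mem_edgeFinset] using hadj
  · ext x
    simp [Sym2.mem_iff, Finset.mem_insert]

lemma aux_filter_le_clique2 (v : V) :
    ((G.cliqueFinset 3).filter (fun t => v ∈ t)).card ≤ (G.cliqueFinset 2).card := by
  apply Finset.card_le_card_of_injOn (fun t => t.erase v)
  · intro t ht
    rw [Finset.mem_coe, Finset.mem_filter, SimpleGraph.mem_cliqueFinset_iff] at ht
    simp only [Finset.mem_coe]
    rw [SimpleGraph.mem_cliqueFinset_iff]
    exact ⟨ht.1.isClique.subset (Finset.erase_subset _ _), by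
      rw [Finset.card_erase_of_mem ht.2, ht.1.card_eq]⟩
  · intro t1 h1 t2 h2 h
    simp only [Finset.coe_filter, Set.mem_setOf_eq] at h1 h2
    have h' : t1.erase v = t2.erase v := h
    rw [← Finset.insert_erase h1.2, h', Finset.insert_erase h2.2]

lemma aux_filter_le_choose (v : V) :
    ((G.cliqueFinset 3).filter (fun t => v ∈ t)).card ≤ (G.degree v).choose 2 := by
  have := Finset.card_powersetCard 2 (G.neighborFinset v)
  rw [SimpleGraph.card_neighborFinset_eq_degree] at this
  rw [← this]
  apply Finset.card_le_card_of_injOn (fun t => t.erase v)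
  · intro t ht
    rw [Finset.mem_coe, Finset.mem_filter, SimpleGraph.mem_cliqueFinset_iff] at ht
    simp only [Finset.mem_coe]
    rw [Finset.mem_powersetCard]
    constructor
    · intro u hu
      rw [Finset.mem_erase] at hu
      rw [SimpleGraph.mem_neighborFinset]
      exact ht.1.isClique ht.2 hu.2 (Ne.symm hu.1)
    · rw [Finset.card_erase_of_mem ht.2, ht.1.card_eq]
  · intro t1 h1 t2 h2 h
    simp only [Finset.coe_filter, Set.mem_setOf_eq] at h1 h2
    have h' : t1.erase v = t2.erase v := h
    rw [← Finset.insert_erase h1.2, h', Finset.insert_erase h2.2]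

lemma aux_triple_count :
    ∑ v : V, ((G.cliqueFinset 3).filter (fun t => v ∈ t)).card
      = 3 * (G.cliqueFinset 3).card := by
  simp_rw [Finset.card_filter]
  rw [Finset.sum_comm]
  have h : ∀ t ∈ G.cliqueFinset 3, (∑ v : V, if v ∈ t then 1 else 0) = 3 := by
    intro t ht
    rw [Finset.sum_ite_mem, Finset.univ_inter, Finset.sum_const, smul_eq_mul, mul_one,
      (SimpleGraph.mem_cliqueFinset_iff.mp ht).card_eq]
  rw [Finset.sum_congr rfl h, Finset.sum_const, smul_eq_mul, mul_comm]

end Aux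

theorem triangle_count_bound {V : Type*} [Fintype V] [DecidableEq V]
    (G : SimpleGraph V) [DecidableRel G.Adj] :
    ((G.cliqueFinset 3).card : ℝ) ≤ (G.edgeFinset.card : ℝ) ^ (3 / 2 : ℝ) := by
  set m : ℝ := (G.edgeFinset.card : ℝ) with hm
  have hm0 : 0 ≤ m := Nat.cast_nonneg _
  have hsq : Real.sqrt (2 * m) ^ 2 = 2 * m := Real.sq_sqrt (by linarith)
  have hsqnn : 0 ≤ Real.sqrt (2 * m) := Real.sqrt_nonneg _
  -- per-vertex bound in ℝ
  have key : ∀ v : V, (((G.cliqueFinset 3).filter (fun t => v ∈ t)).card : ℝ)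
      ≤ (G.degree v : ℝ) * Real.sqrt (2 * m) / 2 := by
    intro v
    have h1 : (((G.cliqueFinset 3).filter (fun t => v ∈ t)).card : ℝ) ≤ m := by
      rw [hm]
      exact_mod_cast (aux_filter_le_clique2 G v).trans (aux_clique2_le_edges G)
    have h2 : (((G.cliqueFinset 3).filter (fun t => v ∈ t)).card : ℝ)
        ≤ (G.degree v : ℝ) ^ 2 / 2 := by
      have hc : (((G.cliqueFinset 3).filter (fun t => v ∈ t)).card : ℝ)
          ≤ ((G.degree v).choose 2 : ℝ) := by exact_mod_cast aux_filter_le_choose G v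
      have : ((G.degree v).choose 2 : ℝ) ≤ (G.degree v : ℝ) ^ 2 / 2 := by
        rw [Nat.choose_two_right]
        have h := Nat.div_mul_le_self (G.degree v * (G.degree v - 1)) 2
        have h2 : (G.degree v * (G.degree v - 1) / 2 : ℕ) * 2 ≤ G.degree v * G.degree v :=
          h.trans (Nat.mul_le_mul_left _ (Nat.sub_le _ _))
        have h3 : ((G.degree v * (G.degree v - 1) / 2 : ℕ) : ℝ) * 2
            ≤ (G.degree v : ℝ) * G.degree v := by exact_mod_cast h2
        nlinarith [h3]
      linarith
    rcases le_total ((G.degree v : ℝ)) (Real.sqrt (2 * m)) with hd | hd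
    · have : (G.degree v : ℝ) ^ 2 / 2 ≤ (G.degree v : ℝ) * Real.sqrt (2 * m) / 2 := by
        have hd0 : (0:ℝ) ≤ (G.degree v : ℝ) := Nat.cast_nonneg _
        nlinarith
      linarith
    · have : m ≤ (G.degree v : ℝ) * Real.sqrt (2 * m) / 2 := by nlinarith
      linarith
  -- sum up
  have hsum : (3:ℝ) * ((G.cliqueFinset 3).card : ℝ)
      = ∑ v : V, (((G.cliqueFinset 3).filter (fun t => v ∈ t)).card : ℝ) := by
    rw [← Nat.cast_sum]
    exact_mod_cast (aux_triple_count G).symm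
  have hdeg : ∑ v : V, (G.degree v : ℝ) = 2 * m := by
    rw [hm]
    exact_mod_cast G.sum_degrees_eq_twice_card_edges
  have h3T : (3:ℝ) * ((G.cliqueFinset 3).card : ℝ) ≤ m * Real.sqrt (2 * m) := by
    rw [hsum]
    calc ∑ v : V, (((G.cliqueFinset 3).filter (fun t => v ∈ t)).card : ℝ)
        ≤ ∑ v : V, (G.degree v : ℝ) * Real.sqrt (2 * m) / 2 :=
          Finset.sum_le_sum (fun v _ => key v)
      _ = (∑ v : V, (G.degree v : ℝ)) * Real.sqrt (2 * m) / 2 := by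
          rw [← Finset.sum_div, ← Finset.sum_mul]
      _ = m * Real.sqrt (2 * m) := by rw [hdeg]; ring
  -- final: m * sqrt(2m) ≤ 3 * m^(3/2)
  have hrpow : m ^ (3 / 2 : ℝ) = Real.sqrt (m ^ 3) := by
    rw [Real.sqrt_eq_rpow, ← Real.rpow_natCast m 3, ← Real.rpow_mul hm0]
    norm_num
  have hfin : m * Real.sqrt (2 * m) ≤ 3 * m ^ (3 / 2 : ℝ) := by
    rw [hrpow]
    have h1 : m * Real.sqrt (2 * m) = Real.sqrt (2 * m ^ 3) := by
      rw [show (2:ℝ) * m ^ 3 = (2 * m) * m ^ 2 by ring]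
      conv_rhs => rw [Real.sqrt_mul (by linarith : (0:ℝ) ≤ 2 * m), Real.sqrt_sq hm0]
      ring
    have h2 : (3:ℝ) * Real.sqrt (m ^ 3) = Real.sqrt (9 * m ^ 3) := by
      rw [show (9:ℝ) * m ^ 3 = 3 ^ 2 * m ^ 3 by ring, Real.sqrt_mul (by positivity),
        Real.sqrt_sq (by norm_num)]
    rw [h1, h2]
    apply Real.sqrt_le_sqrt
    nlinarith [pow_nonneg hm0 3]
  linarith
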